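/- Let ε > 0 be a real number. Then there exists a constant C > 0 (depending only on ε) such that for every y ≥ 0 one has ∫_{-y}^{∞} ⟨x⟩^{-ε} ⟨x+y⟩^{-1/2} (x+y)^{-1/2} dx ≤ C. -/

import Mathlib

open MeasureTheory Real

/-- Japanese bracket `⟨y⟩ = 1 + |y|`. -/
noncomputable def jb (y : ℝ) : ℝ := 1 + |y|

lemma jb_pos (x : ℝ) : 0 < jb x := by
  unfold jb; positivity

lemma one_le_jb (x : ℝ) : 1 ≤ jb x := le_add_of_nonneg_right (abs_nonneg x)

lemma continuous_jb : Continuous jb := continuous_const.add continuous_abs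

lemma jb_rpow_nonneg (x c : ℝ) : 0 ≤ jb x ^ c := Real.rpow_nonneg (jb_pos x).le c

lemma integrable_jb_rpow {r : ℝ} (hr : 1 < r) :
    Integrable (fun x : ℝ => jb x ^ (-r)) := by
  have h := integrable_one_add_norm (E := ℝ) (μ := volume) (r := r) (by simpa using hr)
  simpa [jb, Real.norm_eq_abs] using h

lemma memLp_of_integrable_rpow {μ : Measure ℝ} {f : ℝ → ℝ} {r : ℝ} (hr : 0 < r)
    (hm : AEStronglyMeasurable f μ) (hi : Integrable (fun x => |f x| ^ r) μ) :
    MemLp f (ENNReal.ofReal r) μ := by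
  have h0 : ENNReal.ofReal r ≠ 0 := by simp [ENNReal.ofReal_eq_zero, not_le, hr]
  have ht : ENNReal.ofReal r ≠ ⊤ := ENNReal.ofReal_ne_top
  have hiff := memLp_norm_rpow_iff (p := ENNReal.ofReal r) (q := ENNReal.ofReal r) hm h0 ht
  rw [ENNReal.div_self h0 ht] at hiff
  rw [← hiff, memLp_one_iff_integrable]
  simpa [Real.norm_eq_abs, ENNReal.toReal_ofReal hr.le] using hi

/-- For `ε > 0`, `∫_{-y}^∞ ⟨x⟩^{-ε} ⟨x+y⟩^{-1/2} (x+y)^{-1/2} dx` is bounded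
uniformly in `y ≥ 0`. -/
theorem integral_shift_bounded (ε : ℝ) (hε : 0 < ε) :
    ∃ C > 0, ∀ y : ℝ, 0 ≤ y →
      (∫ x in Set.Ioi (-y),
          jb x ^ (-ε) * jb (x + y) ^ (-(1 / 2 : ℝ)) * (x + y) ^ (-(1 / 2 : ℝ))) ≤ C := by
  set δ : ℝ := min ε 1 with hδdef
  have hδ0 : 0 < δ := lt_min hε one_pos
  have hδ1 : δ ≤ 1 := min_le_right _ _
  have hδε : δ ≤ ε := min_le_left _ _
  set q : ℝ := 1 + δ / 2 with hqdef
  set p : ℝ := (2 + δ) / δ with hpdef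
  have hq1 : 1 < q := by rw [hqdef]; linarith
  have hq2 : q < 2 := by rw [hqdef]; linarith
  have hq0 : 0 < q := by linarith
  have hpq : p.HolderConjugate q := by
    rw [Real.holderConjugate_iff]
    constructor
    · rw [hpdef, lt_div_iff₀ hδ0]; linarith
    · rw [hpdef, hqdef]; field_simp; ring
  have hp0 : 0 < p := hpq.pos
  have hδp : -δ * p = -(2 + δ) := by
    rw [hpdef]; field_simp
  -- the fixed factor
  set g : ℝ → ℝ := fun t => jb t ^ (-(1 / 2 : ℝ)) * t ^ (-(1 / 2 : ℝ)) with hgdef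
  have hgmeas : Measurable g :=
    ((continuous_jb.rpow_const fun x => Or.inl (jb_pos x).ne').measurable).mul
      (measurable_id.pow measurable_const)
  have hg_nonneg : ∀ t ∈ Set.Ioi (0 : ℝ), 0 ≤ g t := fun t ht =>
    mul_nonneg (jb_rpow_nonneg _ _) (Real.rpow_nonneg (le_of_lt ht) _)
  -- integrability of g ^ q on (0, ∞)
  have hI1 : IntegrableOn (fun t => g t ^ q) (Set.Ioc 0 1) := by
    have hmaj : IntegrableOn (fun t : ℝ => t ^ (-(1 / 2 : ℝ) * q)) (Set.Ioc 0 1) := by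
      have h := intervalIntegral.intervalIntegrable_rpow' (a := 0) (b := 1)
        (r := -(1 / 2 : ℝ) * q) (by nlinarith)
      rwa [intervalIntegrable_iff_integrableOn_Ioc_of_le (by norm_num)] at h
    refine hmaj.integrable.mono' ((hgmeas.pow measurable_const).aestronglyMeasurable) ?_
    filter_upwards [ae_restrict_mem measurableSet_Ioc] with t ht
    have ht0 : 0 < t := ht.1
    have hgt : g t ≤ t ^ (-(1 / 2 : ℝ)) := by
      have h1 : jb t ^ (-(1 / 2 : ℝ)) ≤ 1 :=
        Real.rpow_le_one_of_one_le_of_nonpos (one_le_jb t) (by norm_num)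
      calc g t ≤ 1 * t ^ (-(1 / 2 : ℝ)) :=
            mul_le_mul_of_nonneg_right h1 (Real.rpow_nonneg ht0.le _)
        _ = t ^ (-(1 / 2 : ℝ)) := one_mul _
    have : g t ^ q ≤ (t ^ (-(1 / 2 : ℝ))) ^ q :=
      Real.rpow_le_rpow (hg_nonneg t ht0) hgt hq0.le
    rw [Real.norm_of_nonneg (Real.rpow_nonneg (hg_nonneg t ht0) q)]
    rwa [Real.rpow_mul ht0.le] 
  have hI2 : IntegrableOn (fun t => g t ^ q) (Set.Ioi 1) := by
    have hmaj : IntegrableOn (fun t : ℝ => t ^ (-q)) (Set.Ioi 1) :=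
      integrableOn_Ioi_rpow_of_lt (by linarith) one_pos
    refine hmaj.mono' ((hgmeas.pow measurable_const).aestronglyMeasurable) ?_
    filter_upwards [ae_restrict_mem measurableSet_Ioi] with t ht
    have ht0 : (0 : ℝ) < t := lt_trans one_pos ht
    have hjb : t ≤ jb t := by
      unfold jb
      have := le_abs_self t; linarith
    have h1 : jb t ^ (-(1 / 2 : ℝ)) ≤ t ^ (-(1 / 2 : ℝ)) :=
      Real.rpow_le_rpow_of_nonpos ht0 hjb (by norm_num)
    have hgt : g t ≤ t ^ (-(1 : ℝ)) := by
      calc g t ≤ t ^ (-(1 / 2 : ℝ)) * t ^ (-(1 / 2 : ℝ)) :=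
            mul_le_mul_of_nonneg_right h1 (Real.rpow_nonneg ht0.le _)
        _ = t ^ (-(1 : ℝ)) := by
            rw [← Real.rpow_add ht0]; norm_num
    have hle : g t ^ q ≤ (t ^ (-(1 : ℝ))) ^ q :=
      Real.rpow_le_rpow (hg_nonneg t ht0) hgt hq0.le
    rw [Real.norm_of_nonneg (Real.rpow_nonneg (hg_nonneg t ht0) q)]
    calc g t ^ q ≤ (t ^ (-(1 : ℝ))) ^ q := hle
      _ = t ^ (-q) := by rw [← Real.rpow_mul ht0.le]; norm_num
  have hBint : IntegrableOn (fun t => g t ^ q) (Set.Ioi 0) := by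
    have hU : Set.Ioc (0 : ℝ) 1 ∪ Set.Ioi 1 = Set.Ioi 0 :=
      Set.Ioc_union_Ioi_eq_Ioi (by norm_num)
    rw [← hU]
    exact hI1.union hI2
  set B : ℝ := ∫ t in Set.Ioi (0 : ℝ), g t ^ q with hBdef
  have hB0 : 0 ≤ B :=
    setIntegral_nonneg measurableSet_Ioi fun t ht =>
      Real.rpow_nonneg (hg_nonneg t ht) q
  have hgMem : MemLp g (ENNReal.ofReal q) (volume.restrict (Set.Ioi (0 : ℝ))) := by
    refine memLp_of_integrable_rpow hq0 hgmeas.aestronglyMeasurable ?_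
    refine hBint.congr ?_
    filter_upwards [ae_restrict_mem measurableSet_Ioi] with t ht
    rw [abs_of_nonneg (hg_nonneg t ht)]
  -- the full-space integral on the jb side
  have haA : Integrable (fun x : ℝ => jb x ^ (-(2 + δ))) :=
    integrable_jb_rpow (by linarith)
  set Aval : ℝ := ∫ x : ℝ, jb x ^ (-(2 + δ)) with hAdef
  have hA0 : 0 ≤ Aval := integral_nonneg fun x => jb_rpow_nonneg _ _
  refine ⟨Aval ^ (1 / p) * B ^ (1 / q) + 1, ?_, ?_⟩
  · have : 0 ≤ Aval ^ (1 / p) * B ^ (1 / q) :=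
      mul_nonneg (Real.rpow_nonneg hA0 _) (Real.rpow_nonneg hB0 _)
    linarith
  intro y hy
  -- change of variables t = x + y
  have hpre : (fun x : ℝ => x + y) ⁻¹' Set.Ioi 0 = Set.Ioi (-y) := by
    ext x
    simp only [Set.mem_preimage, Set.mem_Ioi]
    constructor <;> intro h <;> linarith
  have hsub :
      (∫ x in Set.Ioi (-y),
          jb x ^ (-ε) * jb (x + y) ^ (-(1 / 2 : ℝ)) * (x + y) ^ (-(1 / 2 : ℝ)))
        = ∫ t in Set.Ioi (0 : ℝ), jb (t - y) ^ (-ε) * g t := by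
    rw [← (measurePreserving_add_right volume y).setIntegral_preimage_emb
      (Homeomorph.addRight y).measurableEmbedding
      (fun t => jb (t - y) ^ (-ε) * g t) (Set.Ioi 0)]
    rw [hpre]
    refine setIntegral_congr_fun measurableSet_Ioi fun x _ => ?_
    simp only [hgdef, add_sub_cancel_right]
    ring
  -- the shifted jb-factor
  have hshift : Integrable (fun t : ℝ => jb (t - y) ^ (-(2 + δ))) := by
    have h := ((measurePreserving_add_right volume (-y)).integrable_comp_emb
      (Homeomorph.addRight (-y)).measurableEmbedding).2 haA
    simpa [Function.comp_def, sub_eq_add_neg] using h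
  have hfcont : Continuous fun t : ℝ => jb (t - y) ^ (-δ) :=
    (continuous_jb.comp (continuous_id.sub continuous_const)).rpow_const
      fun x => Or.inl (jb_pos _).ne'
  have hfp_eq : ∀ t : ℝ, (jb (t - y) ^ (-δ)) ^ p = jb (t - y) ^ (-(2 + δ)) := by
    intro t
    rw [← Real.rpow_mul (jb_pos _).le, hδp]
  have hfMem : MemLp (fun t : ℝ => jb (t - y) ^ (-δ)) (ENNReal.ofReal p)
      (volume.restrict (Set.Ioi (0 : ℝ))) := by
    refine memLp_of_integrable_rpow hp0 hfcont.aestronglyMeasurable ?_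
    have : Integrable (fun t : ℝ => (jb (t - y) ^ (-δ)) ^ p)
        (volume.restrict (Set.Ioi (0 : ℝ))) := by
      refine Integrable.congr hshift.integrableOn ?_
      exact Filter.Eventually.of_forall fun t => (hfp_eq t).symm
    refine this.congr (Filter.Eventually.of_forall fun t => ?_)
    simp only [abs_of_nonneg (jb_rpow_nonneg _ _)]
  have hfnn : 0 ≤ᵐ[volume.restrict (Set.Ioi (0 : ℝ))] fun t : ℝ => jb (t - y) ^ (-δ) :=
    Filter.Eventually.of_forall fun t => jb_rpow_nonneg _ _
  have hgnn : 0 ≤ᵐ[volume.restrict (Set.Ioi (0 : ℝ))] g := by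
    filter_upwards [ae_restrict_mem measurableSet_Ioi] with t ht
    exact hg_nonneg t ht
  -- integrability of the product, via Hölder
  have hfg_int : Integrable (fun t : ℝ => jb (t - y) ^ (-δ) * g t)
      (volume.restrict (Set.Ioi (0 : ℝ))) := by
    have hpqr : (1 : ENNReal) / 1 = 1 / ENNReal.ofReal p + 1 / ENNReal.ofReal q := by
      simp only [one_div]
      rw [inv_one]
      exact hpq.inv_add_inv_ennreal.symm
    haveI : ENNReal.HolderTriple (ENNReal.ofReal p) (ENNReal.ofReal q) 1 :=
      ⟨by simpa [one_div] using hpqr.symm⟩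
    have h := (hgMem.smul hfMem : MemLp
      ((fun t : ℝ => jb (t - y) ^ (-δ)) • g) 1 (volume.restrict (Set.Ioi (0 : ℝ))))
    rw [memLp_one_iff_integrable] at h
    exact h
  -- monotonicity in the exponent
  have hmono : (∫ t in Set.Ioi (0 : ℝ), jb (t - y) ^ (-ε) * g t)
      ≤ ∫ t in Set.Ioi (0 : ℝ), jb (t - y) ^ (-δ) * g t := by
    refine integral_mono_of_nonneg ?_ hfg_int ?_
    · filter_upwards [ae_restrict_mem measurableSet_Ioi] with t ht
      exact mul_nonneg (jb_rpow_nonneg _ _) (hg_nonneg t ht)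
    · filter_upwards [ae_restrict_mem measurableSet_Ioi] with t ht
      exact mul_le_mul_of_nonneg_right
        (Real.rpow_le_rpow_of_exponent_le (one_le_jb _) (neg_le_neg hδε))
        (hg_nonneg t ht)
  -- Hölder's inequality
  have hHolder := integral_mul_le_Lp_mul_Lq_of_nonneg hpq hfnn hgnn hfMem hgMem
  -- bound the f-side integral
  have hsetA : (∫ t in Set.Ioi (0 : ℝ), (jb (t - y) ^ (-δ)) ^ p) ≤ Aval := by
    have h1 : (∫ t in Set.Ioi (0 : ℝ), (jb (t - y) ^ (-δ)) ^ p)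
        = ∫ t in Set.Ioi (0 : ℝ), jb (t - y) ^ (-(2 + δ)) := by
      refine setIntegral_congr_fun measurableSet_Ioi fun t _ => hfp_eq t
    rw [h1]
    have h2 : (∫ t in Set.Ioi (0 : ℝ), jb (t - y) ^ (-(2 + δ)))
        ≤ ∫ t : ℝ, jb (t - y) ^ (-(2 + δ)) :=
      setIntegral_le_integral hshift (Filter.Eventually.of_forall fun t => jb_rpow_nonneg _ _)
    have h3 : (∫ t : ℝ, jb (t - y) ^ (-(2 + δ))) = Aval := by
      rw [hAdef]
      exact integral_sub_right_eq_self (fun u : ℝ => jb u ^ (-(2 + δ))) y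
    linarith
  have hfinal : (∫ t in Set.Ioi (0 : ℝ), jb (t - y) ^ (-δ) * g t)
      ≤ Aval ^ (1 / p) * B ^ (1 / q) := by
    refine hHolder.trans ?_
    have hAq : (∫ t in Set.Ioi (0 : ℝ), (jb (t - y) ^ (-δ)) ^ p) ^ (1 / p)
        ≤ Aval ^ (1 / p) := by
      refine Real.rpow_le_rpow ?_ hsetA (by positivity)
      exact setIntegral_nonneg measurableSet_Ioi fun t _ =>
        Real.rpow_nonneg (jb_rpow_nonneg _ _) _
    exact mul_le_mul_of_nonneg_right hAq (Real.rpow_nonneg hB0 _)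
  rw [hsub]
  have := hmono.trans hfinal
  linarith
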